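/- Local approximation of quasi-local even observables: let Λ ⊆ Γ be finite, X ⊆ Λ, ε > 0, and A ∈ 𝔄_Λ⁺. If ‖[A, B]‖ ≤ ε‖B‖ for all B ∈ 𝔄_{Λ∖X}, then ‖A − 𝔼_X^Λ(A)‖ ≤ ε; in particular, since 𝔼_X^Λ(A) ∈ 𝔄_X⁺, there exists A′ ∈ 𝔄_X⁺ with ‖A − A′‖ ≤ ε. -/

import Mathlib

open scoped Classical

/-- The canonical anticommutation relations for a family `a x` of annihilation
operators in a C*-algebra. -/
def IsCAR {Γ A : Type*} [Ring A] [StarRing A] (a : Γ → A) : Prop :=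
  (∀ x y, a x * a y + a y * a x = 0) ∧
  (∀ x y, star (a x) * star (a y) + star (a y) * star (a x) = 0) ∧
  (∀ x y, a x * star (a y) + star (a y) * a x = if x = y then (1 : A) else 0)

/-- The four possible factors of a monomial at a site `x`:
`1`, `a x`, `a x *`, and `a x * a x`. -/
def carFactor {Γ A : Type*} [Ring A] [StarRing A] (a : Γ → A) (k : Fin 4) (x : Γ) : A :=
  match k with
  | 0 => 1
  | 1 => a x
  | 2 => star (a x)
  | 3 => star (a x) * a x

/-- The monomial with factor pattern `k` along the enumeration `l` of a finite set of sites. -/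
def carMonomial {Γ A : Type*} [Ring A] [StarRing A] (a : Γ → A) (l : List Γ)
    (k : Γ → Fin 4) : A :=
  (l.map fun x => carFactor a (k x) x).prod

/-- The number of odd factors (`a x` or `a x *`) of the monomial with pattern `k` along `l`. -/
def carOddCount {Γ : Type*} (l : List Γ) (k : Γ → Fin 4) : ℕ :=
  l.countP fun x => decide (k x = 1 ∨ k x = 2)

/-- `𝔄_X`: the linear span of the monomials supported in the finite set `X`. -/
def carSpan {Γ A : Type*} [Ring A] [StarRing A] [Algebra ℂ A] (a : Γ → A) (X : Finset Γ) :
    Submodule ℂ A :=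
  Submodule.span ℂ {m | ∃ (l : List Γ) (k : Γ → Fin 4),
    l.Nodup ∧ l.toFinset = X ∧ m = carMonomial a l k}

/-- `𝔄_X⁺`: the linear span of the even monomials supported in the finite set `X`. -/
def carSpanEven {Γ A : Type*} [Ring A] [StarRing A] [Algebra ℂ A] (a : Γ → A) (X : Finset Γ) :
    Submodule ℂ A :=
  Submodule.span ℂ {m | ∃ (l : List Γ) (k : Γ → Fin 4),
    l.Nodup ∧ l.toFinset = X ∧ Even (carOddCount l k) ∧ m = carMonomial a l k}

/-- The single-site unitaries `u_x^(0) = 1`, `u_x^(1) = a_x* + a_x`, `u_x^(2) = a_x* − a_x`,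
`u_x^(3) = 1 − 2 a_x* a_x`. -/
def uFactor {Γ A : Type*} [Ring A] [StarRing A] (a : Γ → A) (k : Fin 4) (x : Γ) : A :=
  match k with
  | 0 => 1
  | 1 => star (a x) + a x
  | 2 => star (a x) - a x
  | 3 => 1 - 2 * (star (a x) * a x)

/-- The unitary `u(α) = u_{x_1}^{(α(x_1))} ⋯ u_{x_n}^{(α(x_n))}` along the enumeration `l`
of `Λ ∖ X`. -/
def uProd {Γ A : Type*} [Ring A] [StarRing A] (a : Γ → A) (l : List Γ)
    (α : Fin l.length → Fin 4) : A :=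
  (List.ofFn fun i => uFactor a (α i) (l.get i)).prod

/-- The conditional expectation `𝔼_X^Λ(B) = 4^{−|Λ∖X|} ∑_{α} u(α)* B u(α)`, where `l` is
an enumeration of `Λ ∖ X`. -/
noncomputable def condExp {Γ A : Type*} [Ring A] [StarRing A] [Algebra ℂ A] (a : Γ → A)
    (l : List Γ) (B : A) : A :=
  ((4 : ℂ) ^ l.length)⁻¹ • ∑ α : Fin l.length → Fin 4, star (uProd a l α) * B * uProd a l α

set_option linter.unusedSectionVars false

section Site
variable {Γ A : Type*} [Ring A] [StarRing A] [Algebra ℂ A] {a : Γ → A} (h : IsCAR a) (x : Γ)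
include h

lemma car_bb : a x * a x = 0 := by
  have h2 := h.1 x x
  have : (2 : ℂ) • (a x * a x) = 0 := by rw [two_smul]; exact h2
  have := congrArg (fun z => ((2:ℂ))⁻¹ • z) this
  simpa [smul_smul] using this

lemma car_ss : star (a x) * star (a x) = 0 := by
  have h2 := h.2.1 x x
  have : (2 : ℂ) • (star (a x) * star (a x)) = 0 := by rw [two_smul]; exact h2
  have := congrArg (fun z => ((2:ℂ))⁻¹ • z) this
  simpa [smul_smul] using this

lemma car_bs : a x * star (a x) = 1 - star (a x) * a x := by
  have h2 := h.2.2 x x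
  rw [if_pos rfl] at h2
  have := eq_sub_of_add_eq h2
  exact this

set_option linter.unusedSectionVars false

lemma car_bb' (z : A) : a x * (a x * z) = 0 := by rw [← mul_assoc, car_bb h, zero_mul]
lemma car_ss' (z : A) : star (a x) * (star (a x) * z) = 0 := by
  rw [← mul_assoc, car_ss h, zero_mul]
lemma car_bs' (z : A) : a x * (star (a x) * z) = z - star (a x) * (a x * z) := by
  rw [← mul_assoc, car_bs h, sub_mul, one_mul, mul_assoc]

lemma uFactor_sq_1 : uFactor a 1 x * uFactor a 1 x = 1 := by
  simp only [uFactor, add_mul, mul_add, car_bb h, car_ss h, car_bs h]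
  abel

lemma uFactor_sq_2 : uFactor a 2 x * uFactor a 2 x = -1 := by
  simp only [uFactor, sub_mul, mul_sub, car_bb h, car_ss h, car_bs h]
  abel

lemma car_ww : (star (a x) * a x) * (star (a x) * a x) = star (a x) * a x := by
  rw [mul_assoc, ← mul_assoc (a x), car_bs h, sub_mul, one_mul, mul_sub,
    ← mul_assoc (star (a x)), ← mul_assoc (star (a x)), car_ss h, zero_mul, zero_mul]
  simp

lemma uFactor_sq_3 : uFactor a 3 x * uFactor a 3 x = 1 := by
  have hw := car_ww h x
  simp only [uFactor, sub_mul, mul_sub, one_mul, mul_one, two_mul, add_mul, mul_add, hw]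
  abel

-- conjugation table at one site
lemma uConj_1_0 : uFactor a 1 x * (1 : A) * uFactor a 1 x = 1 := by
  rw [mul_one]; exact uFactor_sq_1 h x
lemma uConj_2_0 : uFactor a 2 x * (1 : A) * uFactor a 2 x = -1 := by
  rw [mul_one]; exact uFactor_sq_2 h x
lemma uConj_3_0 : uFactor a 3 x * (1 : A) * uFactor a 3 x = 1 := by
  rw [mul_one]; exact uFactor_sq_3 h x

lemma uConj_1_1 : uFactor a 1 x * a x * uFactor a 1 x = star (a x) := by
  simp only [uFactor, mul_add, add_mul, mul_assoc, car_bb h, car_bb' h, car_ss h, car_ss' h,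
    car_bs h, car_bs' h, mul_one, one_mul, mul_zero, zero_mul, mul_sub, sub_mul]
  abel
lemma uConj_2_1 : uFactor a 2 x * a x * uFactor a 2 x = star (a x) := by
  simp only [uFactor, mul_add, add_mul, mul_assoc, car_bb h, car_bb' h, car_ss h, car_ss' h,
    car_bs h, car_bs' h, mul_one, one_mul, mul_zero, zero_mul, mul_sub, sub_mul]
  abel
lemma uConj_3_1 : uFactor a 3 x * a x * uFactor a 3 x = -(a x) := by
  simp only [uFactor, two_mul, mul_add, add_mul, mul_assoc, car_bb h, car_bb' h, car_ss h,
    car_ss' h, car_bs h, car_bs' h, mul_one, one_mul, mul_zero, zero_mul, mul_sub, sub_mul]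
  abel
lemma uConj_1_2 : uFactor a 1 x * star (a x) * uFactor a 1 x = a x := by
  simp only [uFactor, mul_add, add_mul, mul_assoc, car_bb h, car_bb' h, car_ss h, car_ss' h,
    car_bs h, car_bs' h, mul_one, one_mul, mul_zero, zero_mul, mul_sub, sub_mul]
  abel
lemma uConj_2_2 : uFactor a 2 x * star (a x) * uFactor a 2 x = a x := by
  simp only [uFactor, mul_add, add_mul, mul_assoc, car_bb h, car_bb' h, car_ss h, car_ss' h,
    car_bs h, car_bs' h, mul_one, one_mul, mul_zero, zero_mul, mul_sub, sub_mul]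
  abel
lemma uConj_3_2 : uFactor a 3 x * star (a x) * uFactor a 3 x = -(star (a x)) := by
  simp only [uFactor, two_mul, mul_add, add_mul, mul_assoc, car_bb h, car_bb' h, car_ss h,
    car_ss' h, car_bs h, car_bs' h, mul_one, one_mul, mul_zero, zero_mul, mul_sub, sub_mul]
  abel
lemma uConj_1_3 : uFactor a 1 x * (star (a x) * a x) * uFactor a 1 x = 1 - star (a x) * a x := by
  simp only [uFactor, mul_add, add_mul, mul_assoc, car_bb h, car_bb' h, car_ss h, car_ss' h,
    car_bs h, car_bs' h, mul_one, one_mul, mul_zero, zero_mul, mul_sub, sub_mul]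
  abel
lemma uConj_2_3 : uFactor a 2 x * (star (a x) * a x) * uFactor a 2 x = star (a x) * a x - 1 := by
  simp only [uFactor, mul_add, add_mul, mul_assoc, car_bb h, car_bb' h, car_ss h, car_ss' h,
    car_bs h, car_bs' h, mul_one, one_mul, mul_zero, zero_mul, mul_sub, sub_mul]
  abel
lemma uConj_3_3 : uFactor a 3 x * (star (a x) * a x) * uFactor a 3 x = star (a x) * a x := by
  simp only [uFactor, two_mul, mul_add, add_mul, mul_assoc, car_bb h, car_bb' h, car_ss h,
    car_ss' h, car_bs h, car_bs' h, mul_one, one_mul, mul_zero, zero_mul, mul_sub, sub_mul]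
  abel

-- star of uFactor
omit h in
lemma uFactor_star_0 : star (uFactor a 0 x) = uFactor a 0 x := by simp [uFactor]
omit h in
lemma uFactor_star_1 : star (uFactor a 1 x) = uFactor a 1 x := by
  simp [uFactor, add_comm]
omit h in
lemma uFactor_star_2 : star (uFactor a 2 x) = -(uFactor a 2 x) := by
  simp [uFactor, star_sub]
omit h in
lemma uFactor_star_3 : star (uFactor a 3 x) = uFactor a 3 x := by
  simp [uFactor, star_sub, star_mul, mul_assoc, mul_two, two_mul]

lemma uFactor_star_mul_self (j : Fin 4) : star (uFactor a j x) * uFactor a j x = 1 := by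
  fin_cases j
  · show star (uFactor a 0 x) * uFactor a 0 x = 1; simp [uFactor]
  · show star (uFactor a 1 x) * uFactor a 1 x = 1
    rw [uFactor_star_1]; exact uFactor_sq_1 h x
  · show star (uFactor a 2 x) * uFactor a 2 x = 1
    rw [uFactor_star_2, neg_mul, uFactor_sq_2 h, neg_neg]
  · show star (uFactor a 3 x) * uFactor a 3 x = 1
    rw [uFactor_star_3]; exact uFactor_sq_3 h x

lemma uFactor_mul_star_self (j : Fin 4) : uFactor a j x * star (uFactor a j x) = 1 := by
  fin_cases j
  · show uFactor a 0 x * star (uFactor a 0 x) = 1; simp [uFactor]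
  · show uFactor a 1 x * star (uFactor a 1 x) = 1
    rw [uFactor_star_1]; exact uFactor_sq_1 h x
  · show uFactor a 2 x * star (uFactor a 2 x) = 1
    rw [uFactor_star_2, mul_neg, uFactor_sq_2 h, neg_neg]
  · show uFactor a 3 x * star (uFactor a 3 x) = 1
    rw [uFactor_star_3]; exact uFactor_sq_3 h x

end Site

section AC
variable {A : Type*} [Ring A]

lemma ac_add {p p' q : A} (h1 : p * q = -(q * p)) (h2 : p' * q = -(q * p')) :
    (p + p') * q = -(q * (p + p')) := by rw [add_mul, h1, h2, mul_add, neg_add]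

lemma ac_sub {p p' q : A} (h1 : p * q = -(q * p)) (h2 : p' * q = -(q * p')) :
    (p - p') * q = -(q * (p - p')) := by
  rw [sub_mul, h1, h2, mul_sub]
  abel

lemma ac_swap {p q : A} (h1 : p * q = -(q * p)) : q * p = -(p * q) := by rw [h1, neg_neg]

lemma ac_ac_comm {p q r : A} (h1 : p * q = -(q * p)) (h2 : p * r = -(r * p)) :
    p * (q * r) = (q * r) * p := by
  rw [← mul_assoc, h1, neg_mul, mul_assoc, h2, mul_neg, neg_neg, ← mul_assoc]

end AC

section Cross
variable {Γ A : Type*} [Ring A] [StarRing A] [Algebra ℂ A] {a : Γ → A} (h : IsCAR a)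
  {x y : Γ} (hxy : x ≠ y)
include h hxy

lemma cr_bb : a x * a y = -(a y * a x) := eq_neg_of_add_eq_zero_left (h.1 x y)
lemma cr_ss : star (a x) * star (a y) = -(star (a y) * star (a x)) :=
  eq_neg_of_add_eq_zero_left (h.2.1 x y)
lemma cr_bs : a x * star (a y) = -(star (a y) * a x) := by
  have := h.2.2 x y
  rw [if_neg hxy] at this
  exact eq_neg_of_add_eq_zero_left this
lemma cr_sb : star (a x) * a y = -(a y * star (a x)) := by
  have := h.2.2 y x
  rw [if_neg (Ne.symm hxy)] at this
  exact ac_swap (eq_neg_of_add_eq_zero_left this)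

/-- odd letters of `x` anticommute with odd letters of `y` -/
lemma letter_ac : ∀ p ∈ ({a x, star (a x)} : Set A), ∀ q ∈ ({a y, star (a y)} : Set A),
    p * q = -(q * p) := by
  rintro p (rfl | rfl) q (rfl | rfl)
  · exact cr_bb h hxy
  · exact cr_bs h hxy
  · exact cr_sb h hxy
  · exact cr_ss h hxy

lemma odd_uFactor_ac_letter (j : Fin 4) (hj : j = 1 ∨ j = 2) (q : A)
    (hq : q ∈ ({a y, star (a y)} : Set A)) :
    uFactor a j x * q = -(q * uFactor a j x) := by
  have hb := letter_ac h hxy (a x) (by simp) q hq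
  have hs := letter_ac h hxy (star (a x)) (by simp) q hq
  rcases hj with rfl | rfl
  · exact ac_add hs hb
  · exact ac_sub hs hb

/-- odd `uFactor` at `x` vs `carFactor` at `y ≠ x`: sign given by parity of the factor. -/
lemma uFactor_odd_carFactor (j m : Fin 4) (hj : j = 1 ∨ j = 2) (hm : m = 1 ∨ m = 2) :
    uFactor a j x * carFactor a m y = -(carFactor a m y * uFactor a j x) := by
  rcases hm with rfl | rfl
  · exact odd_uFactor_ac_letter h hxy j hj _ (by simp [carFactor])
  · exact odd_uFactor_ac_letter h hxy j hj _ (by simp [carFactor])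

lemma uFactor_odd_carFactor_even (j m : Fin 4) (hj : j = 1 ∨ j = 2) (hm : m = 0 ∨ m = 3) :
    uFactor a j x * carFactor a m y = carFactor a m y * uFactor a j x := by
  rcases hm with rfl | rfl
  · simp [carFactor]
  · exact ac_ac_comm (odd_uFactor_ac_letter h hxy j hj _ (by simp))
      (odd_uFactor_ac_letter h hxy j hj _ (by simp))

omit h hxy in
lemma comm_mul {p q r : A} (h1 : p * q = q * p) (h2 : p * r = r * p) :
    p * (q * r) = (q * r) * p := by
  rw [← mul_assoc, h1, mul_assoc, h2, ← mul_assoc]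

lemma w_comm_carFactor (m : Fin 4) :
    (star (a x) * a x) * carFactor a m y = carFactor a m y * (star (a x) * a x) := by
  have hcl : ∀ q ∈ ({a y, star (a y)} : Set A),
      (star (a x) * a x) * q = q * (star (a x) * a x) := by
    intro q hq
    exact (ac_ac_comm (letter_ac h (Ne.symm hxy) q hq (star (a x)) (by simp))
      (letter_ac h (Ne.symm hxy) q hq (a x) (by simp))).symm
  fin_cases m
  · show _ * (1:A) = 1 * _; rw [mul_one, one_mul]
  · exact hcl (a y) (by simp)
  · exact hcl (star (a y)) (by simp)
  · exact comm_mul (hcl (star (a y)) (by simp)) (hcl (a y) (by simp))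

lemma uFactor_even_carFactor (j m : Fin 4) (hj : j = 0 ∨ j = 3) :
    uFactor a j x * carFactor a m y = carFactor a m y * uFactor a j x := by
  rcases hj with rfl | rfl
  · show (1:A) * _ = _ * 1; rw [one_mul, mul_one]
  · show (1 - 2 * (star (a x) * a x)) * carFactor a m y
      = carFactor a m y * (1 - 2 * (star (a x) * a x))
    have hw := w_comm_carFactor h hxy m
    rw [sub_mul, mul_sub, one_mul, mul_one, two_mul, add_mul, mul_add, hw]
end Cross

section Monomial
variable {Γ A : Type*} [DecidableEq Γ] [Ring A] [StarRing A] [Algebra ℂ A] {a : Γ → A}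
  (h : IsCAR a)

lemma carMonomial_nil (k : Γ → Fin 4) : carMonomial a [] k = 1 := rfl

lemma carMonomial_cons (y : Γ) (t : List Γ) (k : Γ → Fin 4) :
    carMonomial a (y :: t) k = carFactor a (k y) y * carMonomial a t k := by
  simp [carMonomial]

lemma carMonomial_append (P Q : List Γ) (k : Γ → Fin 4) :
    carMonomial a (P ++ Q) k = carMonomial a P k * carMonomial a Q k := by
  simp [carMonomial]

lemma carMonomial_congr {l : List Γ} {k₁ k₂ : Γ → Fin 4} (hk : ∀ y ∈ l, k₁ y = k₂ y) :
    carMonomial a l k₁ = carMonomial a l k₂ := by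
  unfold carMonomial
  congr 1
  exact List.map_congr_left fun y hy => by rw [hk y hy]

lemma carOddCount_cons (y : Γ) (t : List Γ) (k : Γ → Fin 4) :
    carOddCount (y :: t) k = carOddCount t k + if (k y = 1 ∨ k y = 2) then 1 else 0 := by
  simp [carOddCount, List.countP_cons]

lemma carOddCount_append (P Q : List Γ) (k : Γ → Fin 4) :
    carOddCount (P ++ Q) k = carOddCount P k + carOddCount Q k := by
  simp [carOddCount, List.countP_append]

/-- drop trivial factors -/
lemma carMonomial_filter (l : List Γ) (k : Γ → Fin 4) (p : Γ → Bool)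
    (hk : ∀ y ∈ l, ¬ p y → k y = 0) :
    carMonomial a (l.filter p) k = carMonomial a l k := by
  induction l with
  | nil => rfl
  | cons y t ih =>
    rw [carMonomial_cons]
    by_cases hy : p y
    · rw [List.filter_cons_of_pos hy, carMonomial_cons,
        ih fun z hz => hk z (List.mem_cons_of_mem _ hz)]
    · rw [List.filter_cons_of_neg (by simpa using hy),
        ih fun z hz => hk z (List.mem_cons_of_mem _ hz),
        hk y (List.mem_cons_self (a := y) (l := t)) hy]
      show _ = (1:A) * _
      rw [one_mul]

lemma carOddCount_filter (l : List Γ) (k : Γ → Fin 4) (p : Γ → Bool)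
    (hk : ∀ y ∈ l, ¬ p y → k y = 0) :
    carOddCount (l.filter p) k = carOddCount l k := by
  induction l with
  | nil => rfl
  | cons y t ih =>
    rw [carOddCount_cons]
    by_cases hy : p y
    · rw [List.filter_cons_of_pos hy, carOddCount_cons,
        ih fun z hz => hk z (List.mem_cons_of_mem _ hz)]
    · rw [List.filter_cons_of_neg (by simpa using hy),
        ih fun z hz => hk z (List.mem_cons_of_mem _ hz),
        hk y (List.mem_cons_self (a := y) (l := t)) hy]
      simp

include h

lemma uFactor_even_carMonomial (x : Γ) (l : List Γ) (hx : x ∉ l) (k : Γ → Fin 4)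
    (j : Fin 4) (hj : j = 0 ∨ j = 3) :
    uFactor a j x * carMonomial a l k = carMonomial a l k * uFactor a j x := by
  induction l with
  | nil => rw [carMonomial_nil, one_mul, mul_one]
  | cons y t ih =>
    have hxy : x ≠ y := fun hh => hx (hh ▸ List.mem_cons_self (a := y) (l := t))
    have hxt : x ∉ t := fun hh => hx (List.mem_cons_of_mem _ hh)
    rw [carMonomial_cons, ← mul_assoc, uFactor_even_carFactor h hxy j (k y) hj, mul_assoc,
      ih hxt, ← mul_assoc]

lemma uFactor_odd_carMonomial (x : Γ) (l : List Γ) (hx : x ∉ l) (k : Γ → Fin 4)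
    (j : Fin 4) (hj : j = 1 ∨ j = 2) :
    uFactor a j x * carMonomial a l k
      = ((-1 : ℂ) ^ carOddCount l k) • (carMonomial a l k * uFactor a j x) := by
  induction l with
  | nil =>
    rw [carMonomial_nil, one_mul, mul_one]
    show _ = ((-1:ℂ) ^ (0:ℕ)) • _
    rw [pow_zero, one_smul]
  | cons y t ih =>
    have hxy : x ≠ y := fun hh => hx (hh ▸ List.mem_cons_self (a := y) (l := t))
    have hxt : x ∉ t := fun hh => hx (List.mem_cons_of_mem _ hh)
    rw [carMonomial_cons, carOddCount_cons, ← mul_assoc]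
    by_cases hm : k y = 1 ∨ k y = 2
    · rw [uFactor_odd_carFactor h hxy j (k y) hj hm, if_pos hm, neg_mul, mul_assoc, ih hxt,
        mul_smul_comm, pow_succ, mul_neg_one, neg_smul, mul_assoc]
    · have hm' : k y = 0 ∨ k y = 3 := by
        rcases hk : k y with ⟨m, hmlt⟩
        interval_cases m <;> simp_all
      rw [uFactor_odd_carFactor_even h hxy j (k y) hj hm', if_neg hm, add_zero, mul_assoc,
        ih hxt, mul_smul_comm, mul_assoc]

lemma carMonomial_mul_uFactor_odd (x : Γ) (l : List Γ) (hx : x ∉ l) (k : Γ → Fin 4)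
    (j : Fin 4) (hj : j = 1 ∨ j = 2) :
    carMonomial a l k * uFactor a j x
      = ((-1 : ℂ) ^ carOddCount l k) • (uFactor a j x * carMonomial a l k) := by
  rw [uFactor_odd_carMonomial h x l hx k j hj, smul_smul, ← pow_add, ← two_mul,
    pow_mul, neg_one_sq, one_pow, one_smul]

end Monomial

section UProd
variable {Γ A : Type*} [DecidableEq Γ] [Ring A] [StarRing A] [Algebra ℂ A] {a : Γ → A}
  (h : IsCAR a)

lemma uProd_nil (α : Fin ([] : List Γ).length → Fin 4) : uProd a [] α = 1 := rfl

lemma uProd_cons (x : Γ) (t : List Γ) (α : Fin (t.length + 1) → Fin 4) :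
    uProd a (x :: t) α = uFactor a (α 0) x * uProd a t (fun i => α i.succ) := by
  simp [uProd, List.ofFn_succ]

include h

omit h in
lemma conj_cancel_left {u v : A} (hu : star u * u = 1) (hv : star v * v = 1) :
    star (u * v) * (u * v) = 1 := by
  rw [star_mul, mul_assoc, ← mul_assoc (star u), hu, one_mul, hv]

omit h in
lemma conj_cancel_right {u v : A} (hu : u * star u = 1) (hv : v * star v = 1) :
    (u * v) * star (u * v) = 1 := by
  rw [star_mul, mul_assoc, ← mul_assoc v, hv, one_mul, hu]

lemma uProd_star_mul_self (l : List Γ) :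
    ∀ α : Fin l.length → Fin 4, star (uProd a l α) * uProd a l α = 1 := by
  induction l with
  | nil => intro α; rw [uProd_nil]; simp
  | cons x t ih =>
    intro α
    rw [uProd_cons x t α]
    exact conj_cancel_left (uFactor_star_mul_self h x _) (ih _)

lemma uProd_mul_star_self (l : List Γ) :
    ∀ α : Fin l.length → Fin 4, uProd a l α * star (uProd a l α) = 1 := by
  induction l with
  | nil => intro α; rw [uProd_nil]; simp
  | cons x t ih =>
    intro α
    rw [uProd_cons x t α]
    exact conj_cancel_right (uFactor_mul_star_self h x _) (ih _)

end UProd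

/-- single-site conditional expectation -/
noncomputable def siteExp {Γ A : Type*} [Ring A] [StarRing A] [Algebra ℂ A] (a : Γ → A)
    (x : Γ) (B : A) : A :=
  (4 : ℂ)⁻¹ • ∑ j : Fin 4, star (uFactor a j x) * B * uFactor a j x

section CondExp
variable {Γ A : Type*} [DecidableEq Γ] [Ring A] [StarRing A] [Algebra ℂ A] {a : Γ → A}

lemma condExp_nil (B : A) : condExp a ([] : List Γ) B = B := by
  simp [condExp, uProd_nil]

lemma condExp_cons (x : Γ) (t : List Γ) (B : A) :
    condExp a (x :: t) B = condExp a t (siteExp a x B) := by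
  show ((4:ℂ) ^ (t.length + 1))⁻¹ • ∑ α : Fin (t.length + 1) → Fin 4,
      star (uProd a (x :: t) α) * B * uProd a (x :: t) α = _
  unfold condExp siteExp
  have key : ∑ α : Fin (t.length + 1) → Fin 4,
      star (uProd a (x :: t) α) * B * uProd a (x :: t) α
      = ∑ p : Fin 4 × (Fin t.length → Fin 4),
        star (uProd a t p.2) * (star (uFactor a p.1 x) * B * uFactor a p.1 x) * uProd a t p.2 := by
    apply Fintype.sum_equiv (Fin.consEquiv (fun _ : Fin (t.length + 1) => Fin 4)).symm
    intro α
    have he : (Fin.consEquiv (fun _ : Fin (t.length + 1) => Fin 4)).symm α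
        = (α 0, fun i => α i.succ) := rfl
    rw [he, uProd_cons x t α, star_mul]
    noncomm_ring
  rw [key, Fintype.sum_prod_type, Finset.sum_comm]
  have hswap : ∀ β : Fin t.length → Fin 4,
      ∑ j : Fin 4, star (uProd a t β) * (star (uFactor a j x) * B * uFactor a j x) * uProd a t β
      = (4:ℂ) • (star (uProd a t β) * ((4:ℂ)⁻¹ • ∑ j : Fin 4,
          star (uFactor a j x) * B * uFactor a j x) * uProd a t β) := by
    intro β
    rw [← Finset.sum_mul, ← Finset.mul_sum, mul_smul_comm, smul_mul_assoc, smul_smul,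
      mul_inv_cancel₀ (by norm_num : (4:ℂ) ≠ 0), one_smul]
  rw [Finset.sum_congr rfl fun β _ => hswap β, ← Finset.smul_sum, smul_smul]
  congr 1
  rw [pow_succ, mul_inv]
  ring

lemma condExp_smul (l : List Γ) (c : ℂ) (B : A) :
    condExp a l (c • B) = c • condExp a l B := by
  unfold condExp
  rw [smul_comm]
  congr 1
  rw [Finset.smul_sum]
  congr 1
  funext α
  rw [mul_smul_comm, smul_mul_assoc]

lemma condExp_zero (l : List Γ) : condExp a l (0 : A) = 0 := by
  simp [condExp]

lemma condExp_add (l : List Γ) (B C : A) :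
    condExp a l (B + C) = condExp a l B + condExp a l C := by
  unfold condExp
  rw [← smul_add, ← Finset.sum_add_distrib]
  congr 1
  congr 1
  funext α
  noncomm_ring

end CondExp

section SiteExpMonomial
variable {Γ A : Type*} [DecidableEq Γ] [Ring A] [StarRing A] [Algebra ℂ A] {a : Γ → A}
  (h : IsCAR a)

lemma fin4_cases (j : Fin 4) : j = 0 ∨ j = 1 ∨ j = 2 ∨ j = 3 := by
  fin_cases j <;> simp

omit h in
lemma carFactor_zero (x : Γ) : carFactor a 0 x = 1 := rfl
omit h in
lemma carFactor_one (x : Γ) : carFactor a 1 x = a x := rfl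
omit h in
lemma carFactor_two (x : Γ) : carFactor a 2 x = star (a x) := rfl
omit h in
lemma carFactor_three (x : Γ) : carFactor a 3 x = star (a x) * a x := rfl
omit h in
lemma uFactor_zero (x : Γ) : uFactor a 0 x = 1 := rfl

omit h in
lemma carOddCount_congr {l : List Γ} {k₁ k₂ : Γ → Fin 4} (hk : ∀ y ∈ l, k₁ y = k₂ y) :
    carOddCount l k₁ = carOddCount l k₂ := by
  induction l with
  | nil => rfl
  | cons y t ih =>
    rw [carOddCount_cons, carOddCount_cons, hk y (List.mem_cons_self (a := y) (l := t)),
      ih fun z hz => hk z (List.mem_cons_of_mem _ hz)]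

omit h in
lemma conj_middle {u mp ms f : A} (hP : u * mp = mp * u) (hS : u * ms = ms * u) :
    u * (mp * (f * ms)) * u = mp * ((u * f * u) * ms) := by
  have h1 : u * (mp * (f * ms)) = mp * (u * (f * ms)) := by
    rw [← mul_assoc, hP, mul_assoc]
  rw [h1, mul_assoc]
  congr 1
  rw [← mul_assoc, mul_assoc (u * f), ← hS, ← mul_assoc]

omit h in
lemma conj_middle_smul {u mp ms f : A} {cP cS : ℂ} (hP : u * mp = cP • (mp * u))
    (hS : ms * u = cS • (u * ms)) :
    u * (mp * (f * ms)) * u = (cP * cS) • (mp * ((u * f * u) * ms)) := by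
  have h2 : u * (f * ms) * u = cS • ((u * f * u) * ms) := by
    rw [← mul_assoc, mul_assoc (u * f), hS, mul_smul_comm, ← mul_assoc]
  have h1 : u * (mp * (f * ms)) = cP • (mp * (u * (f * ms))) := by
    rw [← mul_assoc, hP, smul_mul_assoc, mul_assoc]
  rw [h1, smul_mul_assoc, mul_assoc, h2, mul_smul_comm, smul_smul]

include h

lemma siteExp_monomial (x : Γ) (P S : List Γ) (hxP : x ∉ P) (hxS : x ∉ S) (k : Γ → Fin 4)
    (hev : Even (carOddCount (P ++ x :: S) k)) :
    ∃ c : ℂ, siteExp a x (carMonomial a (P ++ x :: S) k)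
        = c • carMonomial a (P ++ x :: S) (Function.update k x 0)
      ∧ (Even (carOddCount (P ++ x :: S) (Function.update k x 0)) ∨ c = 0) := by
  classical
  set MP := carMonomial a P k with hMPdef
  set MS := carMonomial a S k with hMSdef
  have hM : carMonomial a (P ++ x :: S) k = MP * (carFactor a (k x) x * MS) := by
    rw [carMonomial_append, carMonomial_cons]
  have hPupd : carMonomial a P (Function.update k x 0) = MP :=
    carMonomial_congr fun y hy => Function.update_of_ne (fun (hh : y = x) => hxP (hh ▸ hy)) _ _
  have hSupd : carMonomial a S (Function.update k x 0) = MS :=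
    carMonomial_congr fun y hy => Function.update_of_ne (fun (hh : y = x) => hxS (hh ▸ hy)) _ _
  have hM' : carMonomial a (P ++ x :: S) (Function.update k x 0) = MP * ((1:A) * MS) := by
    rw [carMonomial_append, carMonomial_cons, Function.update_self, hPupd, hSupd,
      carFactor_zero]
  have hcountP : carOddCount P (Function.update k x 0) = carOddCount P k :=
    carOddCount_congr fun y hy => Function.update_of_ne (fun (hh : y = x) => hxP (hh ▸ hy)) _ _
  have hcountS : carOddCount S (Function.update k x 0) = carOddCount S k :=
    carOddCount_congr fun y hy => Function.update_of_ne (fun (hh : y = x) => hxS (hh ▸ hy)) _ _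
  have hcount' : carOddCount (P ++ x :: S) (Function.update k x 0)
      = carOddCount P k + carOddCount S k := by
    rw [carOddCount_append, carOddCount_cons, hcountP, hcountS, Function.update_self]
    simp
  have hcount : carOddCount (P ++ x :: S) k
      = carOddCount P k + (carOddCount S k + if (k x = 1 ∨ k x = 2) then 1 else 0) := by
    rw [carOddCount_append, carOddCount_cons]
  -- the four conjugation formulas for the middle
  have hP1 := uFactor_odd_carMonomial h x P hxP k 1 (Or.inl rfl)
  have hS1 := carMonomial_mul_uFactor_odd h x S hxS k 1 (Or.inl rfl)
  have hP2 := uFactor_odd_carMonomial h x P hxP k 2 (Or.inr rfl)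
  have hS2 := carMonomial_mul_uFactor_odd h x S hxS k 2 (Or.inr rfl)
  have hP3 := uFactor_even_carMonomial h x P hxP k 3 (Or.inr rfl)
  have hS3 := uFactor_even_carMonomial h x S hxS k 3 (Or.inr rfl)
  rcases fin4_cases (k x) with hk | hk | hk | hk
  -- case k x = 0
  · have hpq : Even (carOddCount P k + carOddCount S k) := by
      rw [hcount, hk] at hev
      simpa using hev
    have hσ : ((-1:ℂ)) ^ carOddCount P k * ((-1:ℂ)) ^ carOddCount S k = 1 := by
      rw [← pow_add]
      exact Even.neg_one_pow hpq
    refine ⟨1, ?_, Or.inl (by rw [hcount']; exact hpq)⟩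
    simp only [siteExp]
    rw [Fin.sum_univ_four, hM, hM', hk, carFactor_zero, uFactor_star_1, uFactor_star_2,
      uFactor_star_3, neg_mul, neg_mul,
      conj_middle_smul hP1 hS1, conj_middle_smul hP2 hS2, conj_middle hP3 hS3,
      uConj_1_0 h, uConj_2_0 h, uConj_3_0 h, hσ, uFactor_zero, star_one]
    simp only [mul_one, one_mul, one_smul, neg_mul, mul_neg, neg_neg, smul_neg]
    module
  -- case k x = 1
  · refine ⟨0, ?_, Or.inr rfl⟩
    simp only [siteExp]
    rw [Fin.sum_univ_four, hM, hM', hk, uFactor_star_1, uFactor_star_2,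
      uFactor_star_3, neg_mul, neg_mul,
      conj_middle_smul hP1 hS1, conj_middle_smul hP2 hS2, conj_middle hP3 hS3]
    have e1 : uFactor a 1 x * carFactor a 1 x * uFactor a 1 x = star (a x) := uConj_1_1 h x
    have e2 : uFactor a 2 x * carFactor a 1 x * uFactor a 2 x = star (a x) := uConj_2_1 h x
    have e3 : uFactor a 3 x * carFactor a 1 x * uFactor a 3 x = -(a x) := uConj_3_1 h x
    rw [e1, e2, e3, uFactor_zero, star_one, carFactor_one]
    simp only [mul_one, one_mul, neg_mul, mul_neg, neg_neg, smul_neg]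
    module
  -- case k x = 2
  · refine ⟨0, ?_, Or.inr rfl⟩
    simp only [siteExp]
    rw [Fin.sum_univ_four, hM, hM', hk, uFactor_star_1, uFactor_star_2,
      uFactor_star_3, neg_mul, neg_mul,
      conj_middle_smul hP1 hS1, conj_middle_smul hP2 hS2, conj_middle hP3 hS3]
    have e1 : uFactor a 1 x * carFactor a 2 x * uFactor a 1 x = a x := uConj_1_2 h x
    have e2 : uFactor a 2 x * carFactor a 2 x * uFactor a 2 x = a x := uConj_2_2 h x
    have e3 : uFactor a 3 x * carFactor a 2 x * uFactor a 3 x = -(star (a x)) := uConj_3_2 h x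
    rw [e1, e2, e3, uFactor_zero, star_one, carFactor_two]
    simp only [mul_one, one_mul, neg_mul, mul_neg, neg_neg, smul_neg]
    module
  -- case k x = 3
  · have hpq : Even (carOddCount P k + carOddCount S k) := by
      rw [hcount, hk] at hev
      simpa using hev
    have hσ : ((-1:ℂ)) ^ carOddCount P k * ((-1:ℂ)) ^ carOddCount S k = 1 := by
      rw [← pow_add]
      exact Even.neg_one_pow hpq
    refine ⟨(2:ℂ)⁻¹, ?_, Or.inl (by rw [hcount']; exact hpq)⟩
    simp only [siteExp]
    rw [Fin.sum_univ_four, hM, hM', hk, uFactor_star_1, uFactor_star_2,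
      uFactor_star_3, neg_mul, neg_mul,
      conj_middle_smul hP1 hS1, conj_middle_smul hP2 hS2, conj_middle hP3 hS3]
    have e1 : uFactor a 1 x * carFactor a 3 x * uFactor a 1 x = 1 - star (a x) * a x := by
      rw [carFactor_three]; exact uConj_1_3 h x
    have e2 : uFactor a 2 x * carFactor a 3 x * uFactor a 2 x = star (a x) * a x - 1 := by
      rw [carFactor_three]; exact uConj_2_3 h x
    have e3 : uFactor a 3 x * carFactor a 3 x * uFactor a 3 x = star (a x) * a x := by
      rw [carFactor_three]; exact uConj_3_3 h x
    rw [e1, e2, e3, hσ, uFactor_zero, star_one, carFactor_three]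
    simp only [mul_one, one_mul, one_smul, sub_mul, mul_sub, neg_mul, mul_neg, neg_neg,
      smul_neg, neg_sub, smul_sub]
    module

end SiteExpMonomial

section CondExpMonomial
variable {Γ A : Type*} [DecidableEq Γ] [Ring A] [StarRing A] [Algebra ℂ A] {a : Γ → A}
  (h : IsCAR a)
include h

lemma condExp_monomial (l : List Γ) : ∀ (L : List Γ) (k : Γ → Fin 4), L.Nodup →
    (∀ x ∈ l, x ∈ L) → Even (carOddCount L k) →
    ∃ (c : ℂ) (k' : Γ → Fin 4), condExp a l (carMonomial a L k) = c • carMonomial a L k'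
      ∧ Even (carOddCount L k') ∧ (∀ y ∈ l, k' y = 0) ∧ (∀ y, k' y = 0 ∨ k' y = k y) := by
  induction l with
  | nil =>
    intro L k _ _ hev
    exact ⟨1, k, by rw [condExp_nil, one_smul], hev, by simp, fun y => Or.inr rfl⟩
  | cons x t ih =>
    intro L k hL hsub hev
    have hx : x ∈ L := hsub x (List.mem_cons_self (a := x) (l := t))
    obtain ⟨P, S, rfl⟩ := List.append_of_mem hx
    have hnd := List.nodup_append'.mp hL
    have hxP : x ∉ P := fun hh => (hnd.2.2 hh (List.mem_cons_self (a := x) (l := S))).elim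
    have hxS : x ∉ S := fun hh => ((List.nodup_cons.mp hnd.2.1).1 hh).elim
    obtain ⟨c, hc, hor⟩ := siteExp_monomial h x P S hxP hxS k hev
    rw [condExp_cons, hc, condExp_smul]
    rcases hor with hev' | rfl
    · obtain ⟨c', k', hck, hek, hzk, hok⟩ := ih (P ++ x :: S) (Function.update k x 0) hL
        (fun y hy => hsub y (List.mem_cons_of_mem _ hy)) hev'
      have hk'x : k' x = 0 := by
        rcases hok x with h0 | hupd
        · exact h0
        · rwa [Function.update_self] at hupd
      refine ⟨c * c', k', by rw [hck, smul_smul], hek, ?_, ?_⟩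
      · intro y hy
        rcases List.mem_cons.mp hy with rfl | hy'
        · exact hk'x
        · exact hzk y hy'
      · intro y
        rcases hok y with h0 | hupd
        · exact Or.inl h0
        · by_cases hyx : y = x
          · subst hyx
            rw [Function.update_self] at hupd
            exact Or.inl hupd
          · rw [Function.update_of_ne hyx] at hupd
            exact Or.inr hupd
    · refine ⟨0, fun _ => 0, ?_, ?_, fun y _ => rfl, fun y => Or.inl rfl⟩
      · rw [zero_smul, zero_smul]
      · show Even (carOddCount (P ++ x :: S) fun _ => 0)
        have h0 : carOddCount (P ++ x :: S) (fun _ => 0) = 0 := by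
          simp [carOddCount]
        rw [h0]
        exact Even.zero

end CondExpMonomial

section USpan
variable {Γ A : Type*} [DecidableEq Γ] [Ring A] [StarRing A] [Algebra ℂ A] {a : Γ → A}

lemma uFactor_mem_span (x : Γ) (j : Fin 4) :
    uFactor a j x ∈ Submodule.span ℂ {m : A | ∃ i : Fin 4, m = carFactor a i x} := by
  fin_cases j
  · exact Submodule.subset_span ⟨0, rfl⟩
  · show (uFactor a 1 x) ∈ _
    have h1 : uFactor a 1 x = carFactor a 2 x + carFactor a 1 x := rfl
    rw [h1]
    exact add_mem (Submodule.subset_span ⟨2, rfl⟩) (Submodule.subset_span ⟨1, rfl⟩)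
  · show (uFactor a 2 x) ∈ _
    have h1 : uFactor a 2 x = carFactor a 2 x - carFactor a 1 x := rfl
    rw [h1]
    exact sub_mem (Submodule.subset_span ⟨2, rfl⟩) (Submodule.subset_span ⟨1, rfl⟩)
  · show (uFactor a 3 x) ∈ _
    have h1 : uFactor a 3 x = carFactor a 0 x - (2:ℂ) • carFactor a 3 x := by
      show (1:A) - 2 * (star (a x) * a x) = _
      rw [carFactor_zero, carFactor_three, two_mul, two_smul]
    rw [h1]
    exact sub_mem (Submodule.subset_span ⟨0, rfl⟩)
      (Submodule.smul_mem _ _ (Submodule.subset_span ⟨3, rfl⟩))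

lemma uProd_mem_span (l : List Γ) (hl : l.Nodup) :
    ∀ α : Fin l.length → Fin 4,
      uProd a l α ∈ Submodule.span ℂ {m : A | ∃ k : Γ → Fin 4, m = carMonomial a l k} := by
  induction l with
  | nil =>
    intro α
    rw [uProd_nil]
    exact Submodule.subset_span ⟨fun _ => 0, rfl⟩
  | cons x t ih =>
    intro α
    obtain ⟨hxt, htnd⟩ := List.nodup_cons.mp hl
    rw [uProd_cons x t α]
    have h1 := uFactor_mem_span (a := a) x (α (0 : Fin (t.length + 1)))
    have h2 := ih htnd (fun i => α i.succ)
    have h3 := Submodule.mul_mem_mul h1 h2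
    rw [Submodule.span_mul_span] at h3
    refine Submodule.span_le.mpr ?_ h3
    rintro m hm
    rw [Set.mem_mul] at hm
    obtain ⟨p, hp, q, hq, rfl⟩ := hm
    obtain ⟨i, rfl⟩ := hp
    obtain ⟨k, rfl⟩ := hq
    apply Submodule.subset_span
    refine ⟨Function.update k x i, ?_⟩
    rw [carMonomial_cons, Function.update_self,
      carMonomial_congr (k₁ := Function.update k x i) (k₂ := k)
        fun y hy => Function.update_of_ne (fun (hh : y = x) => hxt (hh ▸ hy)) _ _]

end USpan

section Norm
variable {A : Type*} [NormedRing A] [StarRing A] [CStarRing A] [NormedAlgebra ℂ A]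

lemma norm_le_one_of_star_mul_self {u : A} (hu : star u * u = 1) : ‖u‖ ≤ 1 := by
  have h1 : ‖(1:A)‖ * ‖(1:A)‖ = ‖(1:A)‖ := by
    conv_rhs => rw [show (1:A) = star 1 * 1 by rw [star_one, one_mul]]
    exact (CStarRing.norm_star_mul_self (x := (1:A))).symm
  have h2 : ‖(1:A)‖ ≤ 1 := by nlinarith [norm_nonneg (1:A)]
  have h3 : ‖u‖ * ‖u‖ = ‖(1:A)‖ := by rw [← CStarRing.norm_star_mul_self, hu]
  nlinarith [norm_nonneg u]

end Norm

/-- local approximation of quasi-local even observables: if `A₀ ∈ 𝔄_Λ⁺`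
almost commutes with every `B ∈ 𝔄_{Λ∖X}` (`‖[A₀,B]‖ ≤ ε‖B‖`), then
`‖A₀ − 𝔼_X^Λ(A₀)‖ ≤ ε`, and `𝔼_X^Λ(A₀) ∈ 𝔄_X⁺`; in particular there is `A' ∈ 𝔄_X⁺` with
`‖A₀ − A'‖ ≤ ε`. -/
theorem condExp_local_approximation
    {Γ A : Type*} [DecidableEq Γ]
    [NormedRing A] [StarRing A] [CStarRing A] [NormedAlgebra ℂ A]
    (a : Γ → A) (hCAR : IsCAR a)
    (X Λ : Finset Γ) (hXΛ : X ⊆ Λ)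
    (l : List Γ) (hl : l.Nodup) (hlset : l.toFinset = Λ \ X)
    (ε : ℝ) (hε : 0 < ε)
    (A₀ : A) (hA : A₀ ∈ carSpanEven a Λ)
    (hcomm : ∀ B ∈ carSpan a (Λ \ X), ‖A₀ * B - B * A₀‖ ≤ ε * ‖B‖) :
    ‖A₀ - condExp a l A₀‖ ≤ ε ∧ condExp a l A₀ ∈ carSpanEven a X := by
  constructor
  · -- norm estimate
    have hcard : (Finset.univ : Finset (Fin l.length → Fin 4)).card = 4 ^ l.length := by
      simp [Fintype.card_fun]
    have hA0 : A₀ - condExp a l A₀ = ((4:ℂ) ^ l.length)⁻¹ •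
        ∑ α : Fin l.length → Fin 4, (A₀ - star (uProd a l α) * A₀ * uProd a l α) := by
      rw [Finset.sum_sub_distrib, smul_sub]
      unfold condExp
      congr 1
      rw [Finset.sum_const, hcard, ← Nat.cast_smul_eq_nsmul ℂ, smul_smul,
        show (((4 ^ l.length : ℕ)) : ℂ) = (4:ℂ) ^ l.length by push_cast; ring,
        inv_mul_cancel₀ (pow_ne_zero _ (by norm_num)), one_smul]
    have hterm : ∀ α : Fin l.length → Fin 4,
        ‖A₀ - star (uProd a l α) * A₀ * uProd a l α‖ ≤ ε := by
      intro α
      set u := uProd a l α with hu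
      have hu1 : star u * u = 1 := uProd_star_mul_self hCAR l α
      have hu2 : u * star u = 1 := uProd_mul_star_self hCAR l α
      have hnu : ‖u‖ ≤ 1 := norm_le_one_of_star_mul_self hu1
      have hnsu : ‖star u‖ ≤ 1 := by
        apply norm_le_one_of_star_mul_self
        rwa [star_star]
      have hmem : u ∈ carSpan a (Λ \ X) := by
        refine Submodule.span_le.mpr ?_ (uProd_mem_span l hl α)
        rintro m ⟨k, rfl⟩
        refine Submodule.subset_span ⟨l, k, hl, ?_, rfl⟩
        rw [show (fun (a b : Γ) => Classical.propDecidable (a = b)) = ‹DecidableEq Γ› from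
          Subsingleton.elim _ _]
        exact hlset
      have heq : A₀ - star u * A₀ * u = star u * (u * A₀ - A₀ * u) := by
        rw [mul_sub, ← mul_assoc, hu1, one_mul, ← mul_assoc]
      rw [heq]
      calc ‖star u * (u * A₀ - A₀ * u)‖ ≤ ‖star u‖ * ‖u * A₀ - A₀ * u‖ := norm_mul_le _ _
        _ = ‖star u‖ * ‖A₀ * u - u * A₀‖ := by rw [norm_sub_rev]
        _ ≤ 1 * (ε * ‖u‖) :=
            mul_le_mul hnsu (hcomm u hmem) (norm_nonneg _) zero_le_one
        _ ≤ ε := by nlinarith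
    rw [hA0, norm_smul]
    have hnc : ‖((4:ℂ) ^ l.length)⁻¹‖ = ((4:ℝ) ^ l.length)⁻¹ := by
      rw [norm_inv, norm_pow]
      norm_num
    rw [hnc]
    calc ((4:ℝ) ^ l.length)⁻¹ * ‖∑ α : Fin l.length → Fin 4,
            (A₀ - star (uProd a l α) * A₀ * uProd a l α)‖
        ≤ ((4:ℝ) ^ l.length)⁻¹ * ((4:ℝ) ^ l.length * ε) := by
          apply mul_le_mul_of_nonneg_left _ (by positivity)
          calc ‖∑ α : Fin l.length → Fin 4, (A₀ - star (uProd a l α) * A₀ * uProd a l α)‖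
              ≤ ∑ α : Fin l.length → Fin 4, ‖A₀ - star (uProd a l α) * A₀ * uProd a l α‖ :=
                norm_sum_le _ _
            _ ≤ ∑ _α : Fin l.length → Fin 4, ε := Finset.sum_le_sum fun α _ => hterm α
            _ = (4:ℝ) ^ l.length * ε := by
                rw [Finset.sum_const, hcard, nsmul_eq_mul]
                push_cast
                ring
      _ = ε := by
          rw [← mul_assoc, inv_mul_cancel₀ (by positivity), one_mul]
  · -- membership
    let E : A →ₗ[ℂ] A :=
      { toFun := condExp a l
        map_add' := condExp_add l
        map_smul' := fun c B => condExp_smul l c B }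
    have hle : carSpanEven a Λ ≤ Submodule.comap E (carSpanEven a X) := by
      refine Submodule.span_le.mpr ?_
      rintro m ⟨L, k, hLnd, hLset, hLev, rfl⟩
      have hinst : (fun (a b : Γ) => Classical.propDecidable (a = b)) = ‹DecidableEq Γ› :=
        Subsingleton.elim _ _
      rw [hinst] at hLset
      simp only [SetLike.mem_coe, Submodule.mem_comap]
      show condExp a l (carMonomial a L k) ∈ carSpanEven a X
      have hsub : ∀ y ∈ l, y ∈ L := by
        intro y hy
        have h1 : y ∈ Λ \ X := by rw [← hlset]; exact List.mem_toFinset.mpr hy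
        have h2 : y ∈ Λ := (Finset.mem_sdiff.mp h1).1
        rw [← hLset] at h2
        exact List.mem_toFinset.mp h2
      obtain ⟨c, k', hck, hek, hzk, -⟩ := condExp_monomial hCAR l L k hLnd hsub hLev
      rw [hck]
      apply Submodule.smul_mem
      have hk0 : ∀ y ∈ L, ¬ ((fun y => decide (y ∈ X)) y = true) → k' y = 0 := by
        intro y hyL hyX
        apply hzk
        have hyΛ : y ∈ Λ := by rw [← hLset]; exact List.mem_toFinset.mpr hyL
        have h1 : y ∈ Λ \ X := Finset.mem_sdiff.mpr ⟨hyΛ, by simpa using hyX⟩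
        rw [← hlset] at h1
        exact List.mem_toFinset.mp h1
      rw [← carMonomial_filter L k' (fun y => decide (y ∈ X)) hk0]
      apply Submodule.subset_span
      refine ⟨L.filter (fun y => decide (y ∈ X)), k', hLnd.filter _, ?_, ?_, rfl⟩
      · rw [hinst]
        ext y
        simp only [List.mem_toFinset, List.mem_filter, decide_eq_true_eq]
        constructor
        · rintro ⟨_, hyX⟩
          exact hyX
        · intro hyX
          refine ⟨?_, hyX⟩
          have : y ∈ Λ := hXΛ hyX
          rw [← hLset] at this
          exact List.mem_toFinset.mp this
      · rw [carOddCount_filter L k' _ hk0]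
        exact hek
    exact hle hA
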